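/- Under the stated topological assumptions, minimization of the Tikhonov functional is stable: fix α > 0 and v^δ ∈ V, and let (v_k) ⊂ V with ‖v_k − v^δ‖ → 0. Then every sequence (u_k) with u_k a minimizer of T_α(·; v_k) has a τ-convergent subsequence, and the τ-limit of every τ-convergent subsequence of (u_k) is a minimizer of T_α(·; v^δ). -/

import Mathlib

open Filter

lemma ereal_const_mul_liminf {α : ℝ} (hα : 0 < α) (f : ℕ → EReal) :
    (α : EReal) * Filter.liminf f atTop = Filter.liminf (fun k => (α : EReal) * f k) atTop := by
  have hmono : Monotone (fun x : EReal => (α : EReal) * x) := fun x y h =>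
    mul_le_mul_of_nonneg_left h (by exact_mod_cast hα.le)
  have hcont : ContinuousAt (fun x : EReal => (α : EReal) * x) (Filter.liminf f atTop) := by
    have h := EReal.continuousAt_mul (p := ((α : EReal), Filter.liminf f atTop))
      (Or.inl (by simp [hα.ne'])) (Or.inl (by simp [hα.ne']))
      (Or.inl (EReal.coe_ne_bot α)) (Or.inl (EReal.coe_ne_top α))
    exact h.comp (Continuous.continuousAt (by continuity))
  exact hmono.map_liminf_of_continuousAt f hcont

/-- The Tikhonov functional `T_α(u; v) = ‖K u − v‖^q + α R(u)`, with values in `[-∞,+∞]`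
(the regularizer `R` takes values in `[0,+∞]`, encoded as `EReal` with `0 ≤ R`). -/
noncomputable def Tik {U V : Type*} [NormedAddCommGroup V]
    (K : U → V) (R : U → EReal) (q α : ℝ) (v : V) (u : U) : EReal :=
  ((‖K u - v‖ ^ q : ℝ) : EReal) + (α : EReal) * R u

/-- Stability of Tikhonov minimization: if `v_k → v^δ` in norm and each `u_k`
minimizes `T_α(·; v_k)`, then `(u_k)` has a τ-convergent subsequence and the τ-limit of
every τ-convergent subsequence minimizes `T_α(·; v^δ)`. -/
theorem tikhonov_stability
    {U V : Type*} [NormedAddCommGroup U] [NormedSpace ℝ U] [CompleteSpace U]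
    [NormedAddCommGroup V] [NormedSpace ℝ V] [CompleteSpace V]
    (τ : TopologicalSpace U)
    (K : U → V) (R : U → EReal) (hR0 : ∀ u, 0 ≤ R u)
    (q : ℝ) (hq : 1 ≤ q)
    (hdom : ∃ u, R u ≠ ⊤)
    -- (1) sublevel sets of the Tikhonov functional are τ-sequentially precompact
    (hcpt : ∀ α : ℝ, 0 < α → ∀ v : V, ∀ M : EReal, ∀ u : ℕ → U,
      (∀ k, Tik K R q α v (u k) ≤ M) →
      ∃ φ : ℕ → ℕ, StrictMono φ ∧ ∃ ubar : U,
        Tendsto (u ∘ φ) atTop (@nhds U τ ubar))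
    -- (2) the norm of V is sequentially lower semicontinuous
    (hnormlsc : ∀ (vk : ℕ → V) (v : V), Tendsto vk atTop (nhds v) →
      ((‖v‖ : ℝ) : EReal) ≤ Filter.liminf (fun k => ((‖vk k‖ : ℝ) : EReal)) atTop)
    -- (3) R is τ-sequentially lower semicontinuous
    (hRlsc : ∀ (uk : ℕ → U) (u : U), Tendsto uk atTop (@nhds U τ u) →
      R u ≤ Filter.liminf (fun k => R (uk k)) atTop)
    -- (4) sublevel sets are τ-sequentially closed and K is sequentially continuous there
    (hcl : ∀ α : ℝ, 0 < α → ∀ v : V, ∀ M : EReal, ∀ (uk : ℕ → U) (u : U),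
      (∀ k, Tik K R q α v (uk k) ≤ M) →
      Tendsto uk atTop (@nhds U τ u) →
      Tik K R q α v u ≤ M ∧ Tendsto (fun k => K (uk k)) atTop (nhds (K u)))
    -- the fixed regularization parameter, data and minimizing sequence
    (α : ℝ) (hα : 0 < α) (vδ : V) (vk : ℕ → V)
    (hv : Tendsto vk atTop (nhds vδ))
    (uk : ℕ → U)
    (hmin : ∀ k, ∀ u : U, Tik K R q α (vk k) (uk k) ≤ Tik K R q α (vk k) u) :
    (∃ φ : ℕ → ℕ, StrictMono φ ∧ ∃ ubar : U,
      Tendsto (uk ∘ φ) atTop (@nhds U τ ubar)) ∧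
    (∀ (φ : ℕ → ℕ) (ubar : U), StrictMono φ →
      Tendsto (uk ∘ φ) atTop (@nhds U τ ubar) →
      ∀ u : U, Tik K R q α vδ ubar ≤ Tik K R q α vδ u) := by
  have hq0 : (0 : ℝ) < q := lt_of_lt_of_le one_pos hq
  have hqne : q ≠ 0 := hq0.ne'
  have hαE : (0 : EReal) ≤ (α : EReal) := by exact_mod_cast hα.le
  have hαR : ∀ w : U, 0 ≤ (α : EReal) * R w := fun w => mul_nonneg hαE (hR0 w)
  obtain ⟨u0, hu0top⟩ := hdom
  have hu0bot : R u0 ≠ ⊥ := fun h => by simpa [h] using hR0 u0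
  set r0 := (R u0).toReal with hr0def
  have hr0 : R u0 = (r0 : ℝ) := (EReal.coe_toReal hu0top hu0bot).symm
  have hr0nn : (0 : ℝ) ≤ r0 := by
    have := hR0 u0; rw [hr0] at this; exact_mod_cast this
  -- bound on ‖K u0 - vk k‖
  have hCbdd : BddAbove (Set.range fun k => ‖K u0 - vk k‖) :=
    Filter.Tendsto.bddAbove_range ((tendsto_const_nhds.sub hv).norm)
  set C := ⨆ k, ‖K u0 - vk k‖ with hCdef
  have hCk : ∀ k, ‖K u0 - vk k‖ ≤ C := fun k => le_ciSup hCbdd k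
  have hCnn : (0 : ℝ) ≤ C := le_trans (norm_nonneg _) (hCk 0)
  set M0r : ℝ := C ^ q + α * r0 with hM0rdef
  have hM0rnn : (0 : ℝ) ≤ M0r :=
    add_nonneg (Real.rpow_nonneg hCnn q) (mul_nonneg hα.le hr0nn)
  -- bound 1: the minimal values are uniformly bounded
  have hbound1 : ∀ k, Tik K R q α (vk k) (uk k) ≤ ((M0r : ℝ) : EReal) := by
    intro k
    refine (hmin k u0).trans ?_
    have heq : Tik K R q α (vk k) u0 = ((‖K u0 - vk k‖ ^ q + α * r0 : ℝ) : EReal) := by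
      simp only [Tik, hr0, ← EReal.coe_mul, ← EReal.coe_add]
    rw [heq]
    exact EReal.coe_le_coe_iff.2
      (add_le_add_left (Real.rpow_le_rpow (norm_nonneg _) (hCk k) hq0.le) _)
  -- bound 2 (real): the residuals are uniformly bounded
  have hbound2 : ∀ k, ‖K (uk k) - vk k‖ ^ q ≤ M0r := by
    intro k
    have h1 : ((‖K (uk k) - vk k‖ ^ q : ℝ) : EReal) ≤ ((M0r : ℝ) : EReal) := by
      refine le_trans ?_ (hbound1 k)
      simp only [Tik]
      exact le_add_of_nonneg_right (hαR _)
    exact_mod_cast h1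
  set B1 : ℝ := M0r ^ (1 / q) with hB1def
  have hB1 : ∀ k, ‖K (uk k) - vk k‖ ≤ B1 := by
    intro k
    have h2 : (‖K (uk k) - vk k‖ ^ q) ^ (1 / q) ≤ M0r ^ (1 / q) :=
      Real.rpow_le_rpow (Real.rpow_nonneg (norm_nonneg _) q) (hbound2 k) (by positivity)
    calc ‖K (uk k) - vk k‖ = (‖K (uk k) - vk k‖ ^ q) ^ (1 / q) := by
          rw [← Real.rpow_mul (norm_nonneg _), mul_one_div_cancel hqne, Real.rpow_one]
      _ ≤ B1 := h2
  have hB2bdd : BddAbove (Set.range fun k => ‖vk k - vδ‖) :=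
    Filter.Tendsto.bddAbove_range ((hv.sub tendsto_const_nhds).norm)
  set B2 := ⨆ k, ‖vk k - vδ‖ with hB2def
  have hB2 : ∀ k, ‖vk k - vδ‖ ≤ B2 := fun k => le_ciSup hB2bdd k
  set B : ℝ := B1 + B2 with hBdef
  have hKB : ∀ k, ‖K (uk k) - vδ‖ ≤ B := by
    intro k
    calc ‖K (uk k) - vδ‖ ≤ ‖K (uk k) - vk k‖ + ‖vk k - vδ‖ := by
          have := dist_triangle (K (uk k)) (vk k) vδ
          simpa [dist_eq_norm] using this
      _ ≤ B1 + B2 := add_le_add (hB1 k) (hB2 k)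
  set M : EReal := ((B ^ q : ℝ) : EReal) + ((M0r : ℝ) : EReal) with hMdef
  have hM : ∀ k, Tik K R q α vδ (uk k) ≤ M := by
    intro k
    simp only [Tik, hMdef]
    refine add_le_add
      (EReal.coe_le_coe_iff.2 (Real.rpow_le_rpow (norm_nonneg _) (hKB k) hq0.le)) ?_
    refine le_trans ?_ (hbound1 k)
    simp only [Tik]
    exact le_add_of_nonneg_left (EReal.coe_nonneg.2 (Real.rpow_nonneg (norm_nonneg _) q))
  refine ⟨hcpt α hα vδ M uk hM, ?_⟩
  intro φ ubar hφ hlim u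
  have hMφ : ∀ k, Tik K R q α vδ ((uk ∘ φ) k) ≤ M := fun k => hM (φ k)
  obtain ⟨hub, hKconv⟩ := hcl α hα vδ M (uk ∘ φ) ubar hMφ hlim
  by_cases hRu : R u = ⊤
  · have : Tik K R q α vδ u = ⊤ := by
      simp only [Tik, hRu, EReal.coe_mul_top_of_pos hα, EReal.coe_add_top]
    rw [this]; exact le_top
  · have hRubot : R u ≠ ⊥ := fun h => by simpa [h] using hR0 u
    set ru := (R u).toReal with hrudef
    have hru : R u = (ru : ℝ) := (EReal.coe_toReal hRu hRubot).symm
    have hvφ : Tendsto (fun k => vk (φ k)) atTop (nhds vδ) := hv.comp hφ.tendsto_atTop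
    have hA : Tendsto (fun k => ((‖K (uk (φ k)) - vk (φ k)‖ ^ q : ℝ) : EReal)) atTop
        (nhds ((‖K ubar - vδ‖ ^ q : ℝ) : EReal)) := by
      refine EReal.tendsto_coe.2 ?_
      have h1 : Tendsto (fun k => ‖K (uk (φ k)) - vk (φ k)‖) atTop (nhds ‖K ubar - vδ‖) :=
        (hKconv.sub hvφ).norm
      exact (Real.continuousAt_rpow_const _ q (Or.inr hq0.le)).tendsto.comp h1
    have hlim1 : ((‖K ubar - vδ‖ ^ q : ℝ) : EReal) =
        Filter.liminf (fun k => ((‖K (uk (φ k)) - vk (φ k)‖ ^ q : ℝ) : EReal)) atTop :=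
      hA.liminf_eq.symm
    have hlsc : R ubar ≤ Filter.liminf (fun k => R (uk (φ k))) atTop := hRlsc (uk ∘ φ) ubar hlim
    have hmul := ereal_const_mul_liminf hα (fun k => R (uk (φ k)))
    have step1 : Tik K R q α vδ ubar ≤
        Filter.liminf (fun k => Tik K R q α (vk (φ k)) (uk (φ k))) atTop := by
      simp only [Tik]
      calc ((‖K ubar - vδ‖ ^ q : ℝ) : EReal) + (α : EReal) * R ubar
          ≤ Filter.liminf (fun k => ((‖K (uk (φ k)) - vk (φ k)‖ ^ q : ℝ) : EReal)) atTop
            + (α : EReal) * Filter.liminf (fun k => R (uk (φ k))) atTop :=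
            add_le_add (le_of_eq hlim1) (mul_le_mul_of_nonneg_left hlsc hαE)
        _ = Filter.liminf (fun k => ((‖K (uk (φ k)) - vk (φ k)‖ ^ q : ℝ) : EReal)) atTop
            + Filter.liminf (fun k => (α : EReal) * R (uk (φ k))) atTop := by rw [hmul]
        _ ≤ Filter.liminf (fun k => ((‖K (uk (φ k)) - vk (φ k)‖ ^ q : ℝ) : EReal)
            + (α : EReal) * R (uk (φ k))) atTop := EReal.le_liminf_add
    have step2 : Filter.liminf (fun k => Tik K R q α (vk (φ k)) (uk (φ k))) atTop ≤
        Filter.liminf (fun k => Tik K R q α (vk (φ k)) u) atTop :=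
      Filter.liminf_le_liminf (Filter.Eventually.of_forall fun k => hmin (φ k) u)
    have step3 : Filter.liminf (fun k => Tik K R q α (vk (φ k)) u) atTop = Tik K R q α vδ u := by
      have ht : Tendsto (fun k => Tik K R q α (vk (φ k)) u) atTop (nhds (Tik K R q α vδ u)) := by
        simp only [Tik, hru, ← EReal.coe_mul, ← EReal.coe_add]
        refine EReal.tendsto_coe.2 ?_
        have h1 : Tendsto (fun k => ‖K u - vk (φ k)‖) atTop (nhds ‖K u - vδ‖) :=
          (tendsto_const_nhds.sub hvφ).norm
        exact ((Real.continuousAt_rpow_const _ q (Or.inr hq0.le)).tendsto.comp h1).add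
          tendsto_const_nhds
      exact ht.liminf_eq
    exact step1.trans (step2.trans_eq step3)
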